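/- The graph K_20 obtained from G_20 by adding the edges {x, y_0}, {x, y_1}, {y_0, y_1} and then contracting the edge {y_0, y_1} is isomorphic to the complete graph on 20 vertices. -/
import Mathlib


/-- Vertices of `G₂₀`: numbers `0,…,17`, with `x = inr 0`, `y₀ = inr 1`, `y₁ = inr 2`. -/
abbrev V20 := ZMod 18 ⊕ Fin 3

def g20rel : V20 → V20 → Prop
  | .inl i, .inl j => i ≠ j
  | .inl i, .inr a => a = 0 ∨ (a = 1 ∧ Even i.val) ∨ (a = 2 ∧ ¬ Even i.val)
  | .inr a, .inl i => a = 0 ∨ (a = 1 ∧ Even i.val) ∨ (a = 2 ∧ ¬ Even i.val)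
  | .inr _, .inr _ => False

def G20 : SimpleGraph V20 := SimpleGraph.fromRel g20rel

/-- `G₂₀` together with the three added edges `{x,y₀}, {x,y₁}, {y₀,y₁}`. -/
def G20plus : SimpleGraph V20 :=
  G20 ⊔ SimpleGraph.fromRel (fun u v => u.isRight ∧ v.isRight)

/-- Vertices after contracting `{y₀, y₁}`: numbers, `x = inr 0`, and `y = inr 1`. -/
abbrev V20c := ZMod 18 ⊕ Fin 2

/-- The quotient map identifying `y₀` and `y₁` to `y`. -/
def contractMap : V20 → V20c
  | .inl i => .inl i
  | .inr a => if a = 0 then .inr 0 else .inr 1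

/-- The graph obtained from `G20plus` by contracting the edge `{y₀, y₁}`. -/
def K20 : SimpleGraph V20c :=
  SimpleGraph.fromRel
    (fun a b => ∃ u v : V20, contractMap u = a ∧ contractMap v = b ∧ G20plus.Adj u v)

lemma K20_eq_top : K20 = ⊤ := by
  ext a b
  simp only [SimpleGraph.top_adj, K20, SimpleGraph.fromRel_adj]
  constructor
  · rintro ⟨h, -⟩; exact h
  · intro hne
    refine ⟨hne, Or.inl ?_⟩
    match a, b with
    | .inl i, .inl j =>
        have hij : i ≠ j := fun h => hne (by rw [h])
        exact ⟨.inl i, .inl j, rfl, rfl, Or.inl ⟨by simpa using hij, Or.inl hij⟩⟩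
    | .inl i, .inr 0 =>
        exact ⟨.inl i, .inr 0, rfl, rfl, Or.inl ⟨by simp, Or.inl (Or.inl rfl)⟩⟩
    | .inl i, .inr 1 =>
        by_cases h : Even i.val
        · exact ⟨.inl i, .inr 1, rfl, by simp [contractMap],
            Or.inl ⟨by simp, Or.inl (Or.inr (Or.inl ⟨rfl, h⟩))⟩⟩
        · exact ⟨.inl i, .inr 2, rfl, by simp [contractMap],
            Or.inl ⟨by simp, Or.inl (Or.inr (Or.inr ⟨rfl, h⟩))⟩⟩
    | .inr 0, .inl j =>
        exact ⟨.inr 0, .inl j, rfl, rfl, Or.inl ⟨by simp, Or.inl (Or.inl rfl)⟩⟩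
    | .inr 1, .inl j =>
        by_cases h : Even j.val
        · exact ⟨.inr 1, .inl j, by simp [contractMap], rfl,
            Or.inl ⟨by simp, Or.inl (Or.inr (Or.inl ⟨rfl, h⟩))⟩⟩
        · exact ⟨.inr 2, .inl j, by simp [contractMap], rfl,
            Or.inl ⟨by simp, Or.inl (Or.inr (Or.inr ⟨rfl, h⟩))⟩⟩
    | .inr 0, .inr 1 =>
        exact ⟨.inr 0, .inr 1, rfl, by simp [contractMap],
          Or.inr ⟨by simp, Or.inl ⟨rfl, rfl⟩⟩⟩
    | .inr 1, .inr 0 =>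
        exact ⟨.inr 1, .inr 0, by simp [contractMap], rfl,
          Or.inr ⟨by simp, Or.inl ⟨rfl, rfl⟩⟩⟩
    | .inr 0, .inr 0 => exact absurd rfl hne
    | .inr 1, .inr 1 => exact absurd rfl hne

theorem stmt_11 : Nonempty (K20 ≃g (⊤ : SimpleGraph (Fin 20))) := by
  have e : V20c ≃ Fin 20 := Fintype.equivFinOfCardEq (by simp)
  exact ⟨K20_eq_top ▸ SimpleGraph.Iso.completeGraph e⟩
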